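/- For every z ∈ ℂ with |z| = 1, every θ ∈ {+1,−1}, and every ψ ∈ ℂ², the bilinear Dirac form of the charge-conjugation projection vanishes: (P^z_θψ)†·γ⁰·(P^z_θψ) = 0, where ψ† = (ψ*)ᵀ is the conjugate transpose. -/

import Mathlib

open Matrix Complex

noncomputable section

/-- Pauli matrix `σ¹ = [[0,1],[1,0]]`. -/
def σ1 : Matrix (Fin 2) (Fin 2) ℂ := !![0, 1; 1, 0]

/-- Pauli matrix `σ³ = [[1,0],[0,−1]]`. -/
def σ3 : Matrix (Fin 2) (Fin 2) ℂ := !![1, 0; 0, -1]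

/-- Two-dimensional `γ⁰ = σ³`. -/
def gamma0 : Matrix (Fin 2) (Fin 2) ℂ := σ3

/-- Two-dimensional `γ² = −iσ¹`. -/
def gamma2 : Matrix (Fin 2) (Fin 2) ℂ := -(I • σ1)

/-- Entrywise complex conjugation `ψ*` of a vector `ψ ∈ ℂ²`. -/
def vstar (ψ : Fin 2 → ℂ) : Fin 2 → ℂ := fun i => starRingEnd ℂ (ψ i)

/-- The charge conjugation operator `C^z_θ ψ = θ·z·γ²ψ*`. -/
def CC (z : ℂ) (θ : ℝ) (ψ : Fin 2 → ℂ) : Fin 2 → ℂ :=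
  ((θ : ℂ) * z) • gamma2.mulVec (vstar ψ)

/-- The projection `P^z_θ ψ = ½(ψ + C^z_θ ψ)`. -/
def PP (z : ℂ) (θ : ℝ) (ψ : Fin 2 → ℂ) : Fin 2 → ℂ :=
  (1 / 2 : ℂ) • (ψ + CC z θ ψ)

/-- For `|z| = 1`, `θ ∈ {+1,−1}`, `ψ ∈ ℂ²`: `(P^z_θψ)†·γ⁰·(P^z_θψ) = 0`. -/
theorem proj_bilinear_form_vanishes_2d (z : ℂ) (hz : ‖z‖ = 1)
    (θ : ℝ) (hθ : θ = 1 ∨ θ = -1) (ψ : Fin 2 → ℂ) :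
    vstar (PP z θ ψ) ⬝ᵥ gamma0.mulVec (PP z θ ψ) = 0 := by
  have hzz : z * (starRingEnd ℂ) z = 1 := by
    rw [Complex.mul_conj, ← Complex.sq_norm, hz]; norm_num
  simp only [vstar, PP, CC, gamma0, gamma2, σ1, σ3, dotProduct, mulVec,
    Fin.sum_univ_two, Pi.smul_apply, Pi.add_apply, smul_eq_mul, _root_.map_mul, map_add,
    Matrix.neg_apply, Matrix.smul_apply, Matrix.cons_val', Matrix.cons_val_zero,
    Matrix.cons_val_one, Matrix.head_cons, Matrix.head_fin_const, Matrix.cons_val_fin_one,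
    Matrix.of_apply, Matrix.empty_val', map_ofNat, _root_.map_one, map_neg, map_div₀, map_zero,
    Complex.conj_I, Complex.conj_conj, Complex.conj_ofReal]
  have hθ2 : (θ : ℂ)^2 = 1 := by rcases hθ with h | h <;> simp [h]
  linear_combination (-(((starRingEnd ℂ) (ψ 0)) * ψ 0 - ((starRingEnd ℂ) (ψ 1)) * ψ 1) / 4) * hθ2 +
    (-(((starRingEnd ℂ) (ψ 0)) * ψ 0 - ((starRingEnd ℂ) (ψ 1)) * ψ 1) * (θ:ℂ)^2 / 2) * hzz +
    ((((starRingEnd ℂ) (ψ 0)) * ψ 0 - ((starRingEnd ℂ) (ψ 1)) * ψ 1) * (θ:ℂ)^2 * z * ((starRingEnd ℂ) z) / 4) * Complex.I_sq +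
    ((((starRingEnd ℂ) (ψ 0)) * ψ 0 - ((starRingEnd ℂ) (ψ 1)) * ψ 1) * (θ:ℂ)^2 / 4) * hzz
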